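/- (Lyapunov condition, periodic potential.) Let V ∈ C¹(ℝ^d) be ℤ^d-periodic (so V and ∇V are bounded). Define G(q,p,r) = Ĉ + (13/32)|p|² + (5/16)|r|² + (13/16)V(q) + (3/16)⟨p,r⟩ on ℝ^{3d}. Then there exist constants Ĉ > 0 and d̂ > 0, depending only on d, sup|V| and sup|∇V|, such that G(x) ≥ 1 for all x ∈ ℝ^{3d}, G(q,p,r) → +∞ as |p|² + |r|² → ∞, and LG(x) ≤ −(1/4) G(x) + d̂ for all x ∈ ℝ^{3d}. -/

import Mathlib

open MeasureTheory Real Filter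

noncomputable section

/-- The phase space `ℝ^{3d}` with coordinates `(q, p, r)`. -/
abbrev Y3 (d : ℕ) := (Fin d → ℝ) × (Fin d → ℝ) × (Fin d → ℝ)

/-- The generator of the generalized Langevin dynamics (all constants set to `1`):
`LG = p·∇_qG − ∇V(q)·∇_pG + r·∇_pG − p·∇_rG − r·∇_rG + Δ_rG`. -/
def Lgle (d : ℕ) (V : (Fin d → ℝ) → ℝ) (G : Y3 d → ℝ) (x : Y3 d) : ℝ :=
  fderiv ℝ G x (x.2.1, 0, 0)
  - fderiv ℝ G x (0, (fun i => fderiv ℝ V x.1 (Pi.single i 1)), 0)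
  + fderiv ℝ G x (0, x.2.2, 0)
  - fderiv ℝ G x (0, 0, x.2.1)
  - fderiv ℝ G x (0, 0, x.2.2)
  + ∑ i, fderiv ℝ (fun y => fderiv ℝ G y (0, 0, Pi.single i 1)) x (0, 0, Pi.single i 1)

open ContinuousLinearMap Finset in
def cP (d : ℕ) (i : Fin d) : Y3 d →L[ℝ] ℝ :=
  (proj i).comp ((fst ℝ (Fin d → ℝ) (Fin d → ℝ)).comp (snd ℝ (Fin d → ℝ) ((Fin d → ℝ) × (Fin d → ℝ))))

open ContinuousLinearMap Finset in
def cR (d : ℕ) (i : Fin d) : Y3 d →L[ℝ] ℝ :=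
  (proj i).comp ((snd ℝ (Fin d → ℝ) (Fin d → ℝ)).comp (snd ℝ (Fin d → ℝ) ((Fin d → ℝ) × (Fin d → ℝ))))

open ContinuousLinearMap in
def cQ (d : ℕ) : Y3 d →L[ℝ] (Fin d → ℝ) := fst ℝ (Fin d → ℝ) ((Fin d → ℝ) × (Fin d → ℝ))

@[simp] lemma cP_apply (d : ℕ) (i : Fin d) (y : Y3 d) : cP d i y = y.2.1 i := rfl
@[simp] lemma cR_apply (d : ℕ) (i : Fin d) (y : Y3 d) : cR d i y = y.2.2 i := rfl
@[simp] lemma cQ_apply (d : ℕ) (y : Y3 d) : cQ d y = y.1 := rfl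

def DG (d : ℕ) (V : (Fin d → ℝ) → ℝ) (y : Y3 d) : Y3 d →L[ℝ] ℝ :=
  ((13:ℝ)/32) • (∑ i, (2 * y.2.1 i) • cP d i) + ((5:ℝ)/16) • (∑ i, (2 * y.2.2 i) • cR d i)
  + ((13:ℝ)/16) • ((fderiv ℝ V y.1).comp (cQ d))
  + ((3:ℝ)/16) • (∑ i, ((y.2.1 i) • cR d i + (y.2.2 i) • cP d i))

lemma hasFDerivAt_G {d : ℕ} (C : ℝ) (V : (Fin d → ℝ) → ℝ) (hV : ContDiff ℝ 1 V) (y : Y3 d) :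
    HasFDerivAt (fun y : Y3 d => C + 13 / 32 * ∑ i, (y.2.1 i) ^ 2 + 5 / 16 * ∑ i, (y.2.2 i) ^ 2
      + 13 / 16 * V y.1 + 3 / 16 * ∑ i, y.2.1 i * y.2.2 i) (DG d V y) y := by
  have hp : ∀ i : Fin d, HasFDerivAt (fun y : Y3 d => (y.2.1 i) ^ 2) ((2 * y.2.1 i) • cP d i) y := by
    intro i
    have h := ((cP d i).hasFDerivAt (x := y)).mul ((cP d i).hasFDerivAt (x := y))
    simpa [pow_two, two_mul, add_smul, Pi.mul_def] using h
  have hr : ∀ i : Fin d, HasFDerivAt (fun y : Y3 d => (y.2.2 i) ^ 2) ((2 * y.2.2 i) • cR d i) y := by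
    intro i
    have h := ((cR d i).hasFDerivAt (x := y)).mul ((cR d i).hasFDerivAt (x := y))
    simpa [pow_two, two_mul, add_smul, Pi.mul_def] using h
  have hx : ∀ i : Fin d, HasFDerivAt (fun y : Y3 d => y.2.1 i * y.2.2 i)
      ((y.2.1 i) • cR d i + (y.2.2 i) • cP d i) y := fun i =>
    ((cP d i).hasFDerivAt (x := y)).mul ((cR d i).hasFDerivAt (x := y))
  have hP : HasFDerivAt (fun y : Y3 d => ∑ i, (y.2.1 i) ^ 2) (∑ i, (2 * y.2.1 i) • cP d i) y :=
    HasFDerivAt.fun_sum (fun i _ => hp i)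
  have hR : HasFDerivAt (fun y : Y3 d => ∑ i, (y.2.2 i) ^ 2) (∑ i, (2 * y.2.2 i) • cR d i) y :=
    HasFDerivAt.fun_sum (fun i _ => hr i)
  have hX : HasFDerivAt (fun y : Y3 d => ∑ i, y.2.1 i * y.2.2 i)
      (∑ i, ((y.2.1 i) • cR d i + (y.2.2 i) • cP d i)) y := HasFDerivAt.fun_sum (fun i _ => hx i)
  have hVq : HasFDerivAt (fun y : Y3 d => V y.1) ((fderiv ℝ V y.1).comp (cQ d)) y :=
    (hV.differentiable one_ne_zero y.1).hasFDerivAt.comp y ((cQ d).hasFDerivAt)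
  exact ((((hP.const_mul (13/32)).const_add C).add (hR.const_mul (5/16))).add
    (hVq.const_mul (13/16))).add (hX.const_mul (3/16))

lemma lap_term {d : ℕ} (C : ℝ) (V : (Fin d → ℝ) → ℝ) (hV : ContDiff ℝ 1 V) (x : Y3 d) (i : Fin d) :
    fderiv ℝ (fun y : Y3 d => fderiv ℝ (fun y : Y3 d => C + 13 / 32 * ∑ i, (y.2.1 i) ^ 2
        + 5 / 16 * ∑ i, (y.2.2 i) ^ 2 + 13 / 16 * V y.1 + 3 / 16 * ∑ i, y.2.1 i * y.2.2 i) y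
        (0, 0, Pi.single i 1)) x (0, 0, Pi.single i 1) = 5/8 := by
  have hfun : (fun y : Y3 d => fderiv ℝ (fun y : Y3 d => C + 13 / 32 * ∑ i, (y.2.1 i) ^ 2
        + 5 / 16 * ∑ i, (y.2.2 i) ^ 2 + 13 / 16 * V y.1 + 3 / 16 * ∑ i, y.2.1 i * y.2.2 i) y
        (0, 0, Pi.single i 1))
      = fun y : Y3 d => 5/8 * y.2.2 i + 3/16 * y.2.1 i := by
    funext y
    rw [(hasFDerivAt_G C V hV y).fderiv]
    simp [DG, ContinuousLinearMap.sum_apply, Pi.single_apply]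
    ring
  rw [hfun]
  have h2 : HasFDerivAt (fun y : Y3 d => 5/8 * y.2.2 i + 3/16 * y.2.1 i)
      ((5/8 : ℝ) • cR d i + (3/16 : ℝ) • cP d i) x :=
    ((cR d i).hasFDerivAt.const_mul _).add ((cP d i).hasFDerivAt.const_mul _)
  rw [h2.fderiv]
  simp

lemma periodic_bounds {d : ℕ} (V : (Fin d → ℝ) → ℝ) (hV : ContDiff ℝ 1 V)
    (hVper : ∀ (k : Fin d → ℤ) (q : Fin d → ℝ), V (q + fun i => (k i : ℝ)) = V q) :
    ∃ MV K : ℝ, 0 ≤ MV ∧ 0 ≤ K ∧ (∀ q, |V q| ≤ MV) ∧ (∀ q, ‖fderiv ℝ V q‖ ≤ K) := by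
  have hS : IsCompact (Set.Icc (0 : Fin d → ℝ) 1) := isCompact_Icc
  obtain ⟨MV, hMV⟩ := hS.exists_bound_of_continuousOn (hV.continuous.continuousOn)
  obtain ⟨K, hK⟩ := hS.exists_bound_of_continuousOn ((hV.continuous_fderiv one_ne_zero).continuousOn)
  have h0 : (0 : Fin d → ℝ) ∈ Set.Icc (0 : Fin d → ℝ) 1 := by
    constructor <;> intro i <;> norm_num
  have hshift : ∀ q : Fin d → ℝ, ∃ k : Fin d → ℤ,
      (q + fun i => (k i : ℝ)) ∈ Set.Icc (0 : Fin d → ℝ) 1 := by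
    intro q
    refine ⟨fun i => -⌊q i⌋, ?_, ?_⟩ <;> intro i <;> simp only [Pi.add_apply, Pi.zero_apply, Pi.one_apply] <;>
      push_cast <;> [linarith [Int.floor_le (q i)]; linarith [Int.lt_floor_add_one (q i)]]
  have hfper : ∀ (k : Fin d → ℤ) (q : Fin d → ℝ),
      fderiv ℝ V (q + fun i => (k i : ℝ)) = fderiv ℝ V q := by
    intro k q
    set kt : Fin d → ℝ := fun i => (k i : ℝ)
    have htr : HasFDerivAt (fun x : Fin d → ℝ => x + kt)
        (ContinuousLinearMap.id ℝ (Fin d → ℝ)) q := (hasFDerivAt_id q).add_const kt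
    have hcomp : HasFDerivAt (fun x => V (x + kt))
        ((fderiv ℝ V (q + kt)).comp (ContinuousLinearMap.id ℝ (Fin d → ℝ))) q :=
      (hV.differentiable one_ne_zero (q + kt)).hasFDerivAt.comp q htr
    have heq : (fun x => V (x + kt)) = V := funext fun x => hVper k x
    rw [heq] at hcomp
    rw [hcomp.fderiv]
    exact (ContinuousLinearMap.comp_id _).symm
  refine ⟨MV, K, le_trans (norm_nonneg _) (hMV 0 h0), le_trans (norm_nonneg _) (hK 0 h0), ?_, ?_⟩
  · intro q
    obtain ⟨k, hk⟩ := hshift q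
    have := hMV _ hk
    rwa [hVper k q] at this
  · intro q
    obtain ⟨k, hk⟩ := hshift q
    have := hK _ hk
    rwa [hfper k q] at this

lemma sum_mul_lower {d : ℕ} (a b : Fin d → ℝ) :
    -(1/2) * (∑ i, a i ^ 2) - (1/2) * (∑ i, b i ^ 2) ≤ ∑ i, a i * b i := by
  have h : (0:ℝ) ≤ ∑ i, (a i + b i) ^ 2 := Finset.sum_nonneg fun i _ => sq_nonneg _
  have he : ∑ i, (a i + b i) ^ 2
      = ∑ i, a i ^ 2 + 2 * ∑ i, a i * b i + ∑ i, b i ^ 2 := by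
    rw [Finset.mul_sum, ← Finset.sum_add_distrib, ← Finset.sum_add_distrib]
    exact Finset.sum_congr rfl fun i _ => by ring
  linarith

lemma sum_mul_upper {d : ℕ} (a b : Fin d → ℝ) :
    ∑ i, a i * b i ≤ (1/2) * (∑ i, a i ^ 2) + (1/2) * (∑ i, b i ^ 2) := by
  have h : (0:ℝ) ≤ ∑ i, (a i - b i) ^ 2 := Finset.sum_nonneg fun i _ => sq_nonneg _
  have he : ∑ i, (a i - b i) ^ 2
      = ∑ i, a i ^ 2 - 2 * ∑ i, a i * b i + ∑ i, b i ^ 2 := by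
    rw [Finset.mul_sum, ← Finset.sum_sub_distrib, ← Finset.sum_add_distrib]
    exact Finset.sum_congr rfl fun i _ => by ring
  linarith

theorem lyapunov_periodic
    (d : ℕ) (hd : 1 ≤ d)
    (V : (Fin d → ℝ) → ℝ) (hV : ContDiff ℝ 1 V)
    (hVper : ∀ (k : Fin d → ℤ) (q : Fin d → ℝ), V (q + fun i => (k i : ℝ)) = V q) :
    ∃ Chat dhat : ℝ, 0 < Chat ∧ 0 < dhat ∧
      (∀ x : Y3 d,
        1 ≤ Chat + 13 / 32 * ∑ i, (x.2.1 i) ^ 2 + 5 / 16 * ∑ i, (x.2.2 i) ^ 2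
            + 13 / 16 * V x.1 + 3 / 16 * ∑ i, x.2.1 i * x.2.2 i) ∧
      (∀ M : ℝ, ∃ R : ℝ, ∀ x : Y3 d,
        R ≤ ∑ i, (x.2.1 i) ^ 2 + ∑ i, (x.2.2 i) ^ 2 →
        M ≤ Chat + 13 / 32 * ∑ i, (x.2.1 i) ^ 2 + 5 / 16 * ∑ i, (x.2.2 i) ^ 2
            + 13 / 16 * V x.1 + 3 / 16 * ∑ i, x.2.1 i * x.2.2 i) ∧
      (∀ x : Y3 d,
        Lgle d V
          (fun y => Chat + 13 / 32 * ∑ i, (y.2.1 i) ^ 2 + 5 / 16 * ∑ i, (y.2.2 i) ^ 2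
            + 13 / 16 * V y.1 + 3 / 16 * ∑ i, y.2.1 i * y.2.2 i) x
        ≤ -(1 / 4) * (Chat + 13 / 32 * ∑ i, (x.2.1 i) ^ 2 + 5 / 16 * ∑ i, (x.2.2 i) ^ 2
            + 13 / 16 * V x.1 + 3 / 16 * ∑ i, x.2.1 i * x.2.2 i) + dhat) := by
  obtain ⟨MV, K, hMV0, hK0, hMV, hK⟩ := periodic_bounds V hV hVper
  refine ⟨1 + 13/16 * MV, (1 + 13/16 * MV)/4 + 5/8 * d + 13/64 * MV + 3/32 * (d * K^2) + 1,
    by positivity, by positivity, ?_, ?_, ?_⟩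
  · intro x
    have h1 := sum_mul_lower x.2.1 x.2.2
    have h2 : 0 ≤ ∑ i, (x.2.1 i) ^ 2 := Finset.sum_nonneg fun i _ => sq_nonneg _
    have h3 : 0 ≤ ∑ i, (x.2.2 i) ^ 2 := Finset.sum_nonneg fun i _ => sq_nonneg _
    have h4 := abs_le.mp (hMV x.1)
    linarith [h4.1]
  · intro M
    refine ⟨32/7 * (|M| + 1), fun x hx => ?_⟩
    have h1 := sum_mul_lower x.2.1 x.2.2
    have h2 : 0 ≤ ∑ i, (x.2.1 i) ^ 2 := Finset.sum_nonneg fun i _ => sq_nonneg _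
    have h3 : 0 ≤ ∑ i, (x.2.2 i) ^ 2 := Finset.sum_nonneg fun i _ => sq_nonneg _
    have h4 := abs_le.mp (hMV x.1)
    have h5 := le_abs_self M
    linarith [h4.1]
  · intro x
    set Chat : ℝ := 1 + 13/16 * MV with hChat
    have hfd : ∀ y : Y3 d, fderiv ℝ (fun y : Y3 d => Chat + 13 / 32 * ∑ i, (y.2.1 i) ^ 2
        + 5 / 16 * ∑ i, (y.2.2 i) ^ 2 + 13 / 16 * V y.1 + 3 / 16 * ∑ i, y.2.1 i * y.2.2 i) y
        = DG d V y := fun y => (hasFDerivAt_G Chat V hV y).fderiv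
    have hLap : ∑ i, fderiv ℝ (fun y : Y3 d => fderiv ℝ (fun y : Y3 d => Chat
        + 13 / 32 * ∑ i, (y.2.1 i) ^ 2 + 5 / 16 * ∑ i, (y.2.2 i) ^ 2 + 13 / 16 * V y.1
        + 3 / 16 * ∑ i, y.2.1 i * y.2.2 i) y (0, 0, Pi.single i 1)) x (0, 0, Pi.single i 1)
        = d * (5/8) := by
      rw [Finset.sum_congr rfl (fun i _ => lap_term Chat V hV x i)]
      simp [Finset.sum_const, Finset.card_univ, mul_comm]
    have hdecomp : fderiv ℝ V x.1 x.2.1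
        = ∑ i, x.2.1 i * fderiv ℝ V x.1 (Pi.single i 1) := by
      have h := (fderiv ℝ V x.1 : (Fin d → ℝ) →ₗ[ℝ] ℝ).pi_apply_eq_sum_univ x.2.1
      simp only [ContinuousLinearMap.coe_coe, smul_eq_mul] at h
      rw [h]
      refine Finset.sum_congr rfl fun i _ => ?_
      congr 2
      funext j
      simp [Pi.single_apply, eq_comm]
    have hgK : ∑ i, (fderiv ℝ V x.1 (Pi.single i 1)) ^ 2 ≤ d * K ^ 2 := by
      calc ∑ i, (fderiv ℝ V x.1 (Pi.single i 1)) ^ 2 ≤ ∑ _i : Fin d, K ^ 2 := by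
            refine Finset.sum_le_sum fun i _ => ?_
            have h1 : |fderiv ℝ V x.1 (Pi.single i 1)| ≤ K := by
              have h := (fderiv ℝ V x.1).le_opNorm (Pi.single i 1)
              rw [Pi.norm_single, norm_one, mul_one] at h
              exact le_trans h (hK x.1)
            have := abs_le.mp h1
            nlinarith
        _ = d * K ^ 2 := by simp [Finset.sum_const, Finset.card_univ, mul_comm]
    have hc1 : -(1/2) * (∑ i, (x.2.2 i) ^ 2) - (1/2) * (∑ i, (fderiv ℝ V x.1 (Pi.single i 1)) ^ 2)
        ≤ ∑ i, x.2.2 i * fderiv ℝ V x.1 (Pi.single i 1) := sum_mul_lower _ _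
    have hc2 : -(1/2) * (∑ i, (x.2.1 i) ^ 2) - (1/2) * (∑ i, (x.2.2 i) ^ 2)
        ≤ ∑ i, x.2.1 i * x.2.2 i := sum_mul_lower _ _
    have hc2b : ∑ i, x.2.1 i * x.2.2 i
        ≤ (1/2) * (∑ i, (x.2.1 i) ^ 2) + (1/2) * (∑ i, (x.2.2 i) ^ 2) := sum_mul_upper _ _
    have h2 : 0 ≤ ∑ i, (x.2.1 i) ^ 2 := Finset.sum_nonneg fun i _ => sq_nonneg _
    have h3 : 0 ≤ ∑ i, (x.2.2 i) ^ 2 := Finset.sum_nonneg fun i _ => sq_nonneg _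
    have h4 := abs_le.mp (hMV x.1)
    rw [Lgle, hLap, hfd x]
    simp only [DG, ContinuousLinearMap.add_apply, ContinuousLinearMap.smul_apply,
      ContinuousLinearMap.sum_apply, ContinuousLinearMap.coe_comp', Function.comp_apply,
      cP_apply, cR_apply, cQ_apply, smul_eq_mul]
    simp only [Pi.zero_apply, map_zero, mul_zero, zero_mul, mul_one, Finset.sum_const_zero,
      add_zero, zero_add]
    rw [hdecomp]
    have hs1 : ∑ i, 2 * x.2.1 i * fderiv ℝ V x.1 (Pi.single i 1)
        = 2 * ∑ i, x.2.1 i * fderiv ℝ V x.1 (Pi.single i 1) := by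
      rw [Finset.mul_sum]; exact Finset.sum_congr rfl fun i _ => by ring
    have hs2 : ∑ i, 2 * x.2.1 i * x.2.2 i = 2 * ∑ i, x.2.1 i * x.2.2 i := by
      rw [Finset.mul_sum]; exact Finset.sum_congr rfl fun i _ => by ring
    have hs3 : ∑ i, 2 * x.2.2 i * x.2.1 i = 2 * ∑ i, x.2.1 i * x.2.2 i := by
      rw [Finset.mul_sum]; exact Finset.sum_congr rfl fun i _ => by ring
    have hs4 : ∑ i, 2 * x.2.2 i * x.2.2 i = 2 * ∑ i, (x.2.2 i) ^ 2 := by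
      rw [Finset.mul_sum]; exact Finset.sum_congr rfl fun i _ => by ring
    have hs5 : ∑ i, x.2.1 i * x.2.1 i = ∑ i, (x.2.1 i) ^ 2 :=
      Finset.sum_congr rfl fun i _ => (pow_two _).symm
    have hs6 : ∑ i, x.2.2 i * x.2.2 i = ∑ i, (x.2.2 i) ^ 2 :=
      Finset.sum_congr rfl fun i _ => (pow_two _).symm
    rw [hs1, hs2, hs3, hs4, hs5, hs6]
    linarith
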